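/- Exponential bound on the number of possible evaluations under partial synchrony: for every non-recursive LOLA stream expression e, let v(e) denote the number of occurrences in e of stream variables. Then for every skew ε ≥ 1 and every position j ∈ {0,…,N}, the set of partially synchronous values val_PS^ε(e)(j) is finite and has cardinality at most (2ε − 1)^{v(e)}. -/
import Mathlib


/-- Non-recursive LOLA stream expressions over a value type `T` and `m` input
stream variables: constants, stream variables, pointwise `k`-ary function
applications, and offset expressions `e[p,c]` with integer offset `p` and
default value `c`. -/
inductive LExpr (T : Type) (m : ℕ) : Type where
  | const : T → LExpr T m
  | var : Fin m → LExpr T m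
  | app : (k : ℕ) → ((Fin k → T) → T) → (Fin k → LExpr T m) → LExpr T m
  | offset : LExpr T m → ℤ → T → LExpr T m

/-- The synchronous valuation `val_S` of a LOLA expression at position `j`,
given the trace length `N` and input streams `τ`. -/
def valS {T : Type} {m : ℕ} (N : ℕ) (τ : Fin m → ℕ → T) : LExpr T m → ℕ → T
  | .const c, _ => c
  | .var i, j => τ i j
  | .app _ f es, j => f (fun l => valS N τ (es l) j)
  | .offset e p c, j =>
      if 0 ≤ (j : ℤ) + p ∧ (j : ℤ) + p ≤ (N : ℤ) then valS N τ e ((j : ℤ) + p).toNat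
      else c

/-- The partially synchronous valuation `val_PS^ε` of a LOLA expression at
position `j`, assigning the set of values obtainable under clock skew `ε`. -/
def valPS {T : Type} {m : ℕ} (N : ℕ) (τ : Fin m → ℕ → T) (ε : ℕ) :
    LExpr T m → ℕ → Set T
  | .const c, _ => {c}
  | .var i, j =>
      {v | ∃ κ : ℕ, max 0 ((j : ℤ) - (ε : ℤ) + 1) ≤ (κ : ℤ) ∧
        (κ : ℤ) ≤ min (N : ℤ) ((j : ℤ) + (ε : ℤ) - 1) ∧ τ i κ = v}
  | .app k f es, j =>
      {v | ∃ vs : Fin k → T, (∀ l, vs l ∈ valPS N τ ε (es l) j) ∧ f vs = v}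
  | .offset e p c, j =>
      if 0 ≤ (j : ℤ) + p ∧ (j : ℤ) + p ≤ (N : ℤ) then valPS N τ ε e ((j : ℤ) + p).toNat
      else {c}

/-- The number of occurrences of stream variables in a LOLA expression. -/
def numVarOcc {T : Type} {m : ℕ} : LExpr T m → ℕ
  | .const _ => 0
  | .var _ => 1
  | .app k _ es => ∑ l : Fin k, numVarOcc (es l)
  | .offset e _ _ => numVarOcc e

/-- exponential bound on the number of possible evaluations under
partial synchrony: for every expression `e` with `v(e)` occurrences of stream
variables, every skew `ε ≥ 1` and position `j ∈ {0,…,N}`, the set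
`val_PS^ε(e)(j)` is finite with at most `(2ε − 1)^{v(e)}` elements. -/
theorem valPS_card_bound {T : Type} {m : ℕ} (N : ℕ) (τ : Fin m → ℕ → T)
    (ε : ℕ) (hε : 1 ≤ ε) (e : LExpr T m) (j : ℕ) (hj : j ≤ N) :
    (valPS N τ ε e j).Finite ∧
      (valPS N τ ε e j).ncard ≤ (2 * ε - 1) ^ numVarOcc e := by
  induction e generalizing j with
  | const c =>
      simp [valPS, numVarOcc]
  | var i =>
      have hset : valPS N τ ε (.var i) j =
          τ i '' ↑(Finset.Icc ((max 0 ((j : ℤ) - (ε : ℤ) + 1)).toNat)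
            ((min (N : ℤ) ((j : ℤ) + (ε : ℤ) - 1)).toNat)) := by
        ext v
        simp only [valPS, Set.mem_setOf_eq, Set.mem_image, Finset.coe_Icc, Set.mem_Icc]
        constructor
        · rintro ⟨κ, h1, h2, rfl⟩
          exact ⟨κ, ⟨by omega, by omega⟩, rfl⟩
        · rintro ⟨κ, ⟨h1, h2⟩, rfl⟩
          exact ⟨κ, by omega, by omega, rfl⟩
      rw [hset]
      refine ⟨(Finset.Icc _ _).finite_toSet.image _, ?_⟩
      calc (τ i '' _).ncard ≤ (↑(Finset.Icc ((max 0 ((j : ℤ) - (ε : ℤ) + 1)).toNat)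
            ((min (N : ℤ) ((j : ℤ) + (ε : ℤ) - 1)).toNat) : Finset ℕ) : Set ℕ).ncard :=
              Set.ncard_image_le (Finset.Icc _ _).finite_toSet
        _ ≤ (2 * ε - 1) ^ numVarOcc (LExpr.var (T := T) i) := by
            rw [Set.ncard_coe_finset, Nat.card_Icc]
            simp only [numVarOcc, pow_one]
            omega
  | app k f es ih =>
      have hfin : ∀ l, (valPS N τ ε (es l) j).Finite := fun l => (ih l j hj).1
      have hset : valPS N τ ε (.app k f es) j =
          f '' (Set.univ.pi fun l => valPS N τ ε (es l) j) := by
        ext v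
        simp only [valPS, Set.mem_setOf_eq, Set.mem_image, Set.mem_pi, Set.mem_univ,
          forall_true_left]
      rw [hset]
      have hpifin : (Set.univ.pi fun l => valPS N τ ε (es l) j).Finite :=
        Set.Finite.pi fun l => hfin l
      refine ⟨hpifin.image _, ?_⟩
      calc (f '' _).ncard ≤ (Set.univ.pi fun l => valPS N τ ε (es l) j).ncard :=
            Set.ncard_image_le hpifin
        _ = ∏ l : Fin k, (valPS N τ ε (es l) j).ncard := by
            rw [← Nat.card_coe_set_eq, Nat.card_congr (Equiv.Set.univPi _),
              Nat.card_pi]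
            simp [Nat.card_coe_set_eq]
        _ ≤ ∏ l : Fin k, (2 * ε - 1) ^ numVarOcc (es l) :=
            Finset.prod_le_prod (fun _ _ => Nat.zero_le _) fun l _ => (ih l j hj).2
        _ = (2 * ε - 1) ^ numVarOcc (LExpr.app k f es) := by
            rw [numVarOcc, Finset.prod_pow_eq_pow_sum]
  | offset e p c ih =>
      by_cases h : 0 ≤ (j : ℤ) + p ∧ (j : ℤ) + p ≤ (N : ℤ)
      · have : valPS N τ ε (.offset e p c) j = valPS N τ ε e ((j : ℤ) + p).toNat := by
          simp [valPS, h]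
        rw [this]
        have hj' : ((j : ℤ) + p).toNat ≤ N := by omega
        exact ⟨(ih _ hj').1, le_trans (ih _ hj').2 (by simp [numVarOcc])⟩
      · have : valPS N τ ε (.offset e p c) j = {c} := by
          simp [valPS, h]
        rw [this]
        refine ⟨Set.finite_singleton c, ?_⟩
        rw [Set.ncard_singleton]
        exact Nat.one_le_pow _ _ (by omega)
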